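/- Let f be a real-valued function that is differentiable on an open convex set U ⊆ ℝᵈ, and suppose its gradient is L₂-Lipschitz on U for some L₂ ≥ 0. Let C ⊆ U be a cube with center x_C and radius r, and suppose x* ∈ C satisfies ∇f(x*) = 0 and f(x*) ≤ f(x) for all x ∈ C. Then f(x*) ≥ f(x_C) − (L₂/2)·r². (Validity of the qBnB(2) quasi-lower bound for unconstrained problems.) -/

import Mathlib

/-- Validity of the qBnB(2) quasi-lower bound for unconstrained problems:
if `f` is differentiable on an open convex set `U` with `L₂`-Lipschitz gradient,
`C` is a cube with center `a` and half-edge lengths `h` (radius `‖h‖`) contained in `U`,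
and `x*` in `C` has vanishing gradient and minimizes `f` on `C`, then
`f x* ≥ f a - (L₂/2) ‖h‖²`. -/
theorem qBnB2_quasi_lower_bound
    {d : ℕ} {U : Set (EuclideanSpace ℝ (Fin d))}
    (hUopen : IsOpen U) (hUconv : Convex ℝ U)
    {f : EuclideanSpace ℝ (Fin d) → ℝ}
    (hdiff : DifferentiableOn ℝ f U)
    {L₂ : ℝ} (hL₂ : 0 ≤ L₂)
    (hLip : ∀ x ∈ U, ∀ y ∈ U, ‖gradient f x - gradient f y‖ ≤ L₂ * ‖x - y‖)
    (a h : EuclideanSpace ℝ (Fin d)) (hh : ∀ i, 0 ≤ h i)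
    (hCU : {x : EuclideanSpace ℝ (Fin d) | ∀ i, |x i - a i| ≤ h i} ⊆ U)
    (xstar : EuclideanSpace ℝ (Fin d))
    (hxC : ∀ i, |xstar i - a i| ≤ h i)
    (hgrad : gradient f xstar = 0)
    (hmin : ∀ x : EuclideanSpace ℝ (Fin d), (∀ i, |x i - a i| ≤ h i) → f xstar ≤ f x) :
    f xstar ≥ f a - L₂ / 2 * ‖h‖ ^ 2 := by
  set v := a - xstar with hv
  -- the segment from xstar to a lies in the cube, hence in U
  have hseg : ∀ t ∈ Set.Icc (0:ℝ) 1, (xstar + t • v) ∈ U := by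
    intro t ht
    apply hCU
    intro i
    have hcoord : (xstar + t • v) i - a i = (1 - t) * (xstar i - a i) := by
      simp only [hv, PiLp.add_apply, PiLp.smul_apply, PiLp.sub_apply, smul_eq_mul]
      ring
    rw [hcoord, abs_mul]
    calc |1 - t| * |xstar i - a i| ≤ 1 * (h i) := by
          apply mul_le_mul _ (hxC i) (abs_nonneg _) zero_le_one
          rw [abs_le]; constructor <;> linarith [ht.1, ht.2]
      _ = h i := one_mul _
  have hγ : ∀ t : ℝ, HasDerivAt (fun t : ℝ => xstar + t • v) v t := by
    intro t
    simpa using ((hasDerivAt_id t).smul_const v).const_add xstar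
  have hφ : ∀ t ∈ Set.Icc (0:ℝ) 1,
      HasDerivAt (fun t : ℝ => f (xstar + t • v))
        (inner ℝ (gradient f (xstar + t • v)) v : ℝ) t := by
    intro t ht
    have hdx : DifferentiableAt ℝ f (xstar + t • v) :=
      hdiff.differentiableAt (hUopen.mem_nhds (hseg t ht))
    have hgx := hdx.hasGradientAt
    have := hgx.hasFDerivAt.comp_hasDerivAt t (hγ t)
    simpa [InnerProductSpace.toDual_apply_apply, Function.comp_def] using this
  set ψ : ℝ → ℝ := fun t => f (xstar + t • v) - L₂ / 2 * ‖v‖ ^ 2 * t ^ 2 with hψdef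
  have hψ : ∀ t ∈ Set.Icc (0:ℝ) 1,
      HasDerivAt ψ
        ((inner ℝ (gradient f (xstar + t • v)) v : ℝ) - L₂ / 2 * ‖v‖ ^ 2 * (2 * t)) t := by
    intro t ht
    have h2 : HasDerivAt (fun t : ℝ => L₂ / 2 * ‖v‖ ^ 2 * t ^ 2)
        (L₂ / 2 * ‖v‖ ^ 2 * (2 * t)) t := by
      simpa [mul_comm, mul_assoc] using (hasDerivAt_pow 2 t).const_mul (L₂ / 2 * ‖v‖ ^ 2)
    exact (hφ t ht).sub h2
  have hbound : ∀ t ∈ Set.Icc (0:ℝ) 1,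
      (inner ℝ (gradient f (xstar + t • v)) v : ℝ) ≤ L₂ * t * ‖v‖ ^ 2 := by
    intro t ht
    have hx0 : xstar ∈ U := by
      have := hseg 0 ⟨le_refl 0, zero_le_one⟩
      simpa using this
    calc (inner ℝ (gradient f (xstar + t • v)) v : ℝ)
        = inner ℝ (gradient f (xstar + t • v) - gradient f xstar) v := by
          rw [hgrad, sub_zero]
      _ ≤ ‖gradient f (xstar + t • v) - gradient f xstar‖ * ‖v‖ :=
          real_inner_le_norm _ _
      _ ≤ (L₂ * ‖(xstar + t • v) - xstar‖) * ‖v‖ := by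
          apply mul_le_mul_of_nonneg_right _ (norm_nonneg _)
          exact hLip _ (hseg t ht) _ hx0
      _ = L₂ * t * ‖v‖ ^ 2 := by
          have : ‖(xstar + t • v) - xstar‖ = t * ‖v‖ := by
            rw [add_sub_cancel_left, norm_smul]
            simp [Real.norm_eq_abs, abs_of_nonneg ht.1]
          rw [this]; ring
  have hanti : AntitoneOn ψ (Set.Icc (0:ℝ) 1) := by
    apply antitoneOn_of_deriv_nonpos (convex_Icc 0 1)
    · intro t ht
      exact ((hψ t ht).continuousAt).continuousWithinAt
    · intro t ht
      rw [interior_Icc] at ht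
      have ht' : t ∈ Set.Icc (0:ℝ) 1 := ⟨le_of_lt ht.1, le_of_lt ht.2⟩
      exact (hψ t ht').differentiableAt.differentiableWithinAt
    · intro t ht
      rw [interior_Icc] at ht
      have ht' : t ∈ Set.Icc (0:ℝ) 1 := ⟨le_of_lt ht.1, le_of_lt ht.2⟩
      rw [(hψ t ht').deriv]
      have := hbound t ht'
      nlinarith [norm_nonneg v, sq_nonneg (‖v‖), ht.1.le]
  have hle : ψ 1 ≤ ψ 0 :=
    hanti (by constructor <;> norm_num) (by constructor <;> norm_num) zero_le_one
  have hψ0 : ψ 0 = f xstar := by simp [hψdef]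
  have hψ1 : ψ 1 = f a - L₂ / 2 * ‖v‖ ^ 2 := by
    simp [hψdef, hv]
  have hvh : ‖v‖ ≤ ‖h‖ := by
    rw [EuclideanSpace.norm_eq, EuclideanSpace.norm_eq]
    apply Real.sqrt_le_sqrt
    apply Finset.sum_le_sum
    intro i _
    have h1 : ‖v i‖ ≤ ‖h i‖ := by
      simp only [hv, PiLp.sub_apply, Real.norm_eq_abs]
      rw [abs_of_nonneg (hh i), abs_sub_comm]
      exact hxC i
    exact pow_le_pow_left₀ (norm_nonneg _) h1 2
  have hsq : L₂ / 2 * ‖v‖ ^ 2 ≤ L₂ / 2 * ‖h‖ ^ 2 := by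
    apply mul_le_mul_of_nonneg_left _ (by linarith)
    exact pow_le_pow_left₀ (norm_nonneg _) hvh 2
  rw [hψ0, hψ1] at hle
  linarith
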